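/- Every core compact sober space is locally compact, i.e. every point has a neighbourhood base of compact sets. -/

import Mathlib

/-- The way-below relation on subsets of a topological space:
every open cover of `q` has a finite subcover of `p`. -/
def WayBelow {X : Type*} [TopologicalSpace X] (p q : Set X) : Prop :=
  ∀ C : Set (Set X), (∀ U ∈ C, IsOpen U) → q ⊆ ⋃₀ C →
    ∃ F ⊆ C, F.Finite ∧ p ⊆ ⋃₀ F

/-- Core compactness. -/
def CoreCompact (X : Type*) [TopologicalSpace X] : Prop :=
  ∀ (x : X) (U : Set X), IsOpen U → x ∈ U → ∃ V, IsOpen V ∧ x ∈ V ∧ WayBelow V U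

/-- A `∪`-basis: a basis containing `∅` and closed under pairwise unions. -/
def IsUnionBasis {X : Type*} [TopologicalSpace X] (B : Set (Set X)) : Prop :=
  TopologicalSpace.IsTopologicalBasis B ∧ ∅ ∈ B ∧ ∀ p ∈ B, ∀ q ∈ B, p ∪ q ∈ B

section aux

variable {X : Type*} [TopologicalSpace X]

lemma wayBelow_subset {p q : Set X} (hq : IsOpen q) (h : WayBelow p q) : p ⊆ q := by
  obtain ⟨F, hFsub, -, hcov⟩ := h {q} (by simpa using hq) (by simp)
  refine hcov.trans ?_
  intro x hx
  obtain ⟨s, hs, hxs⟩ := hx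
  rcases hFsub hs with rfl
  exact hxs

lemma wayBelow_mono {p' p q q' : Set X} (hp : p' ⊆ p) (hq : q ⊆ q')
    (h : WayBelow p q) : WayBelow p' q' := by
  intro C hC hcov
  obtain ⟨F, hF, hFfin, hsub⟩ := h C hC (hq.trans hcov)
  exact ⟨F, hF, hFfin, hp.trans hsub⟩

lemma wayBelow_union {p₁ p₂ q : Set X} (h₁ : WayBelow p₁ q) (h₂ : WayBelow p₂ q) :
    WayBelow (p₁ ∪ p₂) q := by
  intro C hC hcov
  obtain ⟨F₁, hF₁, hfin₁, hsub₁⟩ := h₁ C hC hcov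
  obtain ⟨F₂, hF₂, hfin₂, hsub₂⟩ := h₂ C hC hcov
  refine ⟨F₁ ∪ F₂, Set.union_subset hF₁ hF₂, hfin₁.union hfin₂, ?_⟩
  rw [Set.sUnion_union]
  exact Set.union_subset_union hsub₁ hsub₂

/-- Interpolation for the way-below relation in a core compact space. -/
lemma wayBelow_interpolate (hcc : CoreCompact X) {V W : Set X}
    (hW : IsOpen W) (h : WayBelow V W) :
    ∃ W', IsOpen W' ∧ WayBelow V W' ∧ WayBelow W' W := by
  classical
  -- cover W by sets A with A ≪ B ≪ W
  set C : Set (Set X) := {A | IsOpen A ∧ ∃ B, IsOpen B ∧ WayBelow A B ∧ WayBelow B W}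
  have hCopen : ∀ U ∈ C, IsOpen U := fun U hU => hU.1
  have hcov : W ⊆ ⋃₀ C := by
    intro y hy
    obtain ⟨B, hBopen, hyB, hBW⟩ := hcc y W hW hy
    obtain ⟨A, hAopen, hyA, hAB⟩ := hcc y B hBopen hyB
    exact ⟨A, ⟨hAopen, B, hBopen, hAB, hBW⟩, hyA⟩
  obtain ⟨F, hFC, hFfin, hVF⟩ := h C hCopen hcov
  -- for each A ∈ F choose B_A
  have hex : ∀ A ∈ F, ∃ B, IsOpen B ∧ WayBelow A B ∧ WayBelow B W := fun A hA => (hFC hA).2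
  choose! B hBopen hAB hBW using hex
  refine ⟨⋃ A ∈ F, B A, ?_, ?_, ?_⟩
  · exact isOpen_biUnion fun A hA => hBopen A hA
  · -- V ⊆ ⋃₀ F and each A ∈ F satisfies A ≪ B A ⊆ union
    have : ∀ A ∈ F, WayBelow A (⋃ A ∈ F, B A) := by
      intro A hA
      exact wayBelow_mono (le_refl A) (Set.subset_biUnion_of_mem (u := B) hA) (hAB A hA)
    -- finite union of way-below is way-below
    have key : ∀ (G : Set (Set X)), G.Finite → G ⊆ F → WayBelow (⋃₀ G) (⋃ A ∈ F, B A) := by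
      intro G hG
      refine Set.Finite.induction_on (motive := fun G _ => G ⊆ F → WayBelow (⋃₀ G) (⋃ A ∈ F, B A)) G hG ?_ ?_
      · intro _
        simp only [Set.sUnion_empty]
        intro C' _ _
        exact ⟨∅, Set.empty_subset _, Set.finite_empty, by simp⟩
      · intro A G' _ _ ih hsub
        rw [Set.sUnion_insert]
        exact wayBelow_union (this A (hsub (Set.mem_insert _ _)))
          (ih ((Set.subset_insert _ _).trans hsub))
    exact wayBelow_mono hVF (le_refl _) (key F hFfin (le_refl _))
  · -- ⋃ A ∈ F, B A ≪ W
    have key : ∀ (G : Set (Set X)), G.Finite → G ⊆ F → WayBelow (⋃ A ∈ G, B A) W := by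
      intro G hG
      refine Set.Finite.induction_on (motive := fun G _ => G ⊆ F → WayBelow (⋃ A ∈ G, B A) W) G hG ?_ ?_
      · intro _
        simp only [Set.mem_empty_iff_false, Set.iUnion_of_empty, Set.iUnion_empty]
        intro C' _ _
        exact ⟨∅, Set.empty_subset _, Set.finite_empty, by simp⟩
      · intro A G' _ _ ih hsub
        have : (⋃ A' ∈ insert A G', B A') = B A ∪ ⋃ A' ∈ G', B A' := by
          simp [Set.biUnion_insert]
        rw [this]
        exact wayBelow_union (hBW A (hsub (Set.mem_insert _ _)))
          (ih ((Set.subset_insert _ _).trans hsub))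
    exact key F hFfin (le_refl _)

/-- Key lemma: the intersection of a way-below descending chain of opens,
in a quasi-sober space, satisfies: any open set containing the intersection
contains one of the terms. -/
lemma exists_chain_subset [QuasiSober X] {W : ℕ → Set X}
    (hop : ∀ n, IsOpen (W n)) (hwb : ∀ n, WayBelow (W (n + 1)) (W n))
    {O : Set X} (hO : IsOpen O) (hKO : (⋂ n, W n) ⊆ O) : ∃ n, W n ⊆ O := by
  classical
  by_contra hcon
  push_neg at hcon
  have hanti : Antitone W := antitone_nat_of_succ_le fun n =>
    wayBelow_subset (hop n) (hwb n)
  -- the collection of closed sets disjoint from O meeting every W n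
  set S : Set (Set X) := {F | IsClosed F ∧ F ⊆ Oᶜ ∧ ∀ n, (F ∩ W n).Nonempty}
  have hOc : Oᶜ ∈ S := by
    refine ⟨hO.isClosed_compl, le_refl _, fun n => ?_⟩
    obtain ⟨x, hx, hxO⟩ := Set.not_subset.mp (hcon n)
    exact ⟨x, hxO, hx⟩
  -- Zorn's lemma for a minimal element
  have hzorn : ∃ m ∈ S, ∀ a ∈ S, a ⊆ m → a = m := by
    have hchains : ∀ c ⊆ S, IsChain (· ⊆ ·) c → ∃ lb ∈ S, ∀ s ∈ c, lb ⊆ s := by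
      intro c hcS hchain
      rcases c.eq_empty_or_nonempty with rfl | hcne
      · exact ⟨Oᶜ, hOc, by simp⟩
      refine ⟨⋂₀ c, ⟨?_, ?_, ?_⟩, fun s hs => Set.sInter_subset_of_mem hs⟩
      · exact isClosed_sInter fun F hF => (hcS hF).1
      · obtain ⟨F₀, hF₀⟩ := hcne
        exact (Set.sInter_subset_of_mem hF₀).trans (hcS hF₀).2.1
      · intro n
        by_contra hemp
        rw [Set.not_nonempty_iff_eq_empty] at hemp
        have hcov : W n ⊆ ⋃₀ (compl '' c) := by
          intro x hx
          by_contra hx'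
          have : x ∈ ⋂₀ c := by
            intro F hF
            by_contra hxF
            exact hx' ⟨Fᶜ, Set.mem_image_of_mem _ hF, hxF⟩
          exact Set.eq_empty_iff_forall_notMem.mp hemp x ⟨this, hx⟩
        obtain ⟨G, hGsub, hGfin, hGcov⟩ := hwb n (compl '' c)
          (fun U hU => by obtain ⟨F, hF, rfl⟩ := hU; exact (hcS hF).1.isOpen_compl) hcov
        have hGne : G.Nonempty := by
          rcases Set.eq_empty_or_nonempty G with rfl | h
          · obtain ⟨F₀, hF₀⟩ := hcne
            obtain ⟨x, hx1, hx2⟩ := (hcS hF₀).2.2 (n + 1)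
            simp only [Set.sUnion_empty, Set.subset_empty_iff] at hGcov
            rw [hGcov] at hx2
            exact hx2.elim
          · exact h
        set G' : Set (Set X) := compl '' G
        have hG'c : G' ⊆ c := by
          intro F hF
          obtain ⟨A, hA, rfl⟩ := hF
          obtain ⟨F', hF', rfl⟩ := hGsub hA
          rwa [compl_compl]
        have hG'fin : G'.Finite := hGfin.image _
        have hG'ne : G'.Nonempty := hGne.image _
        obtain ⟨m, hmG', hmin⟩ : ∃ m ∈ G', ∀ F ∈ G', F ⊆ m → m = F := by
          obtain ⟨m, hm1, hm2⟩ := hG'fin.exists_minimalFor id G' hG'ne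
          exact ⟨m, hm1, fun F hF h => le_antisymm (hm2 hF h) h⟩
        have hmleast : ∀ F ∈ G', m ⊆ F := by
          intro F hF
          rcases hchain.total (hG'c hmG') (hG'c hF) with h | h
          · exact h
          · exact (show m = F from hmin F hF h).subset
        have hsub : W (n + 1) ⊆ mᶜ := by
          refine hGcov.trans ?_
          intro x hx
          obtain ⟨A, hA, hxA⟩ := hx
          intro hxm
          have : m ⊆ Aᶜ := hmleast Aᶜ (Set.mem_image_of_mem _ hA)
          exact this hxm hxA
        obtain ⟨x, hx1, hx2⟩ := (hcS (hG'c hmG')).2.2 (n + 1)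
        exact hsub hx2 hx1
    obtain ⟨m, hm⟩ := zorn_superset S hchains
    exact ⟨m, hm.prop, fun a ha hab => hm.eq_of_subset ha hab⟩
  obtain ⟨F, ⟨hFcl, hFO, hFW⟩, hFmin⟩ := hzorn
  -- F is irreducible
  have hFne : F.Nonempty := (hFW 0).mono (Set.inter_subset_left)
  have hirr : IsIrreducible F := by
    refine ⟨hFne, fun u v hu hv hFu hFv => ?_⟩
    by_contra hemp
    rw [Set.not_nonempty_iff_eq_empty] at hemp
    have hsplit : F = (F ∩ uᶜ) ∪ (F ∩ vᶜ) := by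
      apply Set.eq_of_subset_of_subset
      · intro x hx
        by_cases hxu : x ∈ u
        · by_cases hxv : x ∈ v
          · exfalso
            have : x ∈ F ∩ (u ∩ v) := ⟨hx, hxu, hxv⟩
            rw [hemp] at this
            exact this
          · exact Or.inr ⟨hx, hxv⟩
        · exact Or.inl ⟨hx, hxu⟩
      · exact Set.union_subset (Set.inter_subset_left) (Set.inter_subset_left)
    have hnotin : ∀ (w : Set X), IsOpen w → (F ∩ w).Nonempty →
        (F ∩ wᶜ) ∈ S → False := by
      intro w hw hFw hmem
      have heq := hFmin _ hmem (Set.inter_subset_left)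
      obtain ⟨x, hxF, hxw⟩ := hFw
      have hx : x ∈ F ∩ wᶜ := heq.symm ▸ hxF
      exact hx.2 hxw
    -- neither part is in S, so each misses some W n
    have h1 : ∃ n, (F ∩ uᶜ) ∩ W n = ∅ := by
      by_contra h
      push_neg at h
      exact hnotin u hu hFu ⟨hFcl.inter hu.isClosed_compl,
        (Set.inter_subset_left).trans hFO,
        fun n => h n⟩
    have h2 : ∃ n, (F ∩ vᶜ) ∩ W n = ∅ := by
      by_contra h
      push_neg at h
      exact hnotin v hv hFv ⟨hFcl.inter hv.isClosed_compl,
        (Set.inter_subset_left).trans hFO,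
        fun n => h n⟩
    obtain ⟨n₁, hn₁⟩ := h1
    obtain ⟨n₂, hn₂⟩ := h2
    obtain ⟨x, hxF, hxW⟩ := hFW (max n₁ n₂)
    have hx1 : x ∈ W n₁ := hanti (le_max_left n₁ n₂) hxW
    have hx2 : x ∈ W n₂ := hanti (le_max_right n₁ n₂) hxW
    rcases hsplit ▸ hxF with h | h
    · exact Set.eq_empty_iff_forall_notMem.mp hn₁ x ⟨h, hx1⟩
    · exact Set.eq_empty_iff_forall_notMem.mp hn₂ x ⟨h, hx2⟩
  obtain ⟨x₀, hx₀⟩ := QuasiSober.sober hirr hFcl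
  -- the generic point lies in every W n
  have hx₀W : ∀ n, x₀ ∈ W n := fun n =>
    (hx₀.mem_open_set_iff (hop n)).mpr (hFW n)
  have : x₀ ∈ O := hKO (Set.mem_iInter.mpr hx₀W)
  exact hFO hx₀.mem this

/-- The intersection of such a chain is compact. -/
lemma isCompact_chain_inter [QuasiSober X] {W : ℕ → Set X}
    (hop : ∀ n, IsOpen (W n)) (hwb : ∀ n, WayBelow (W (n + 1)) (W n)) :
    IsCompact (⋂ n, W n) := by
  classical
  rw [isCompact_iff_finite_subcover]
  intro ι U hU hcov
  have hO : IsOpen (⋃ i, U i) := isOpen_iUnion hU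
  obtain ⟨n, hn⟩ := exists_chain_subset hop hwb hO hcov
  obtain ⟨F, hFsub, hFfin, hFcov⟩ := hwb n (Set.range U)
    (fun V hV => by obtain ⟨i, rfl⟩ := hV; exact hU i)
    (hn.trans (by rw [Set.sUnion_range]))
  -- choose indices
  rcases F.eq_empty_or_nonempty with rfl | ⟨V₀, hV₀⟩
  · refine ⟨∅, ?_⟩
    have hK : (⋂ m, W m) ⊆ W (n + 1) := Set.iInter_subset _ _
    refine hK.trans (hFcov.trans ?_)
    simp
  · have : Nonempty ι := by
      obtain ⟨i, _⟩ := hFsub hV₀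
      exact ⟨i⟩
    have hch : ∀ V ∈ F, ∃ i, U i = V := fun V hV => hFsub hV
    choose! f hf using hch
    refine ⟨hFfin.toFinset.image f, ?_⟩
    have hK : (⋂ m, W m) ⊆ W (n + 1) := Set.iInter_subset _ _
    refine hK.trans (hFcov.trans ?_)
    intro x hx
    obtain ⟨V, hV, hxV⟩ := hx
    simp only [Set.mem_iUnion, Finset.mem_image, Set.Finite.mem_toFinset]
    have hx' : x ∈ U (f V) := by rw [hf V hV]; exact hxV
    exact ⟨f V, ⟨V, hV, rfl⟩, hx'⟩

end aux

theorem stmt12 {X : Type*} [TopologicalSpace X] [QuasiSober X] [T0Space X]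
    (hcc : CoreCompact X) : LocallyCompactSpace X := by
  classical
  constructor
  intro x n hn
  obtain ⟨U, hUn, hUopen, hxU⟩ := mem_nhds_iff.mp hn
  obtain ⟨V, hVopen, hxV, hVU⟩ := hcc x U hUopen hxU
  -- build the interpolating chain
  set σ := {W : Set X // IsOpen W ∧ WayBelow V W}
  have step : ∀ s : σ, ∃ t : σ, WayBelow t.1 s.1 := by
    rintro ⟨W, hWopen, hVW⟩
    obtain ⟨W', hW'open, hVW', hW'W⟩ := wayBelow_interpolate hcc hWopen hVW
    exact ⟨⟨W', hW'open, hVW'⟩, hW'W⟩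
  choose g hg using step
  let f : ℕ → σ := fun n => Nat.rec (⟨U, hUopen, hVU⟩ : σ) (fun _ s => g s) n
  set W : ℕ → Set X := fun n => (f n).1 with hW
  have hop : ∀ n, IsOpen (W n) := fun n => (f n).2.1
  have hwb : ∀ n, WayBelow (W (n + 1)) (W n) := fun n => hg (f n)
  have hVsub : ∀ n, V ⊆ W n := fun n => wayBelow_subset (hop n) (f n).2.2
  refine ⟨⋂ n, W n, ?_, ?_, ?_⟩
  · exact mem_nhds_iff.mpr ⟨V, Set.subset_iInter hVsub, hVopen, hxV⟩
  · exact (Set.iInter_subset W 0).trans hUn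
  · exact isCompact_chain_inter hop hwb
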